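/- Let a<0, c<0, and let p = p₁/p₂ ≥ 1 be a rational with p₁, p₂ odd and coprime. Then there exist positive constants c₀ and c₁, depending only on a, c, and p, such that for all (η,u) ∈ X: 𝓗(η,u) ≥ c₀·‖(η,u)‖²_X·(1 − c₁·‖(η,u)‖^p_X). In particular, if ‖(η,u)‖_X ≤ (1/(2c₁))^{1/p} then 𝓗(η,u) ≥ 0 and ‖(η,u)‖_X ≤ (2𝓗(η,u)/c₀)^{1/2}. -/

import Mathlib

open MeasureTheory Real Filter Topology Set

noncomputable section

/-- `f` belongs to `H¹(ℝ)`: differentiable with `f, f' ∈ L²(ℝ)`. -/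
def InH1 (f : ℝ → ℝ) : Prop :=
  Differentiable ℝ f ∧ MemLp f 2 (volume : Measure ℝ) ∧
    MemLp (deriv f) 2 (volume : Measure ℝ)

/-- Square of the `X = H¹ × H¹` norm. -/
def XnormSq (ψ v : ℝ → ℝ) : ℝ :=
  ∫ x : ℝ, (ψ x ^ 2 + deriv ψ x ^ 2 + v x ^ 2 + deriv v x ^ 2)

/-- Distance in `X`. -/
def Xdist (f g : (ℝ → ℝ) × (ℝ → ℝ)) : ℝ :=
  Real.sqrt (XnormSq (fun x => f.1 x - g.1 x) (fun x => f.2 x - g.2 x))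

/-- Sign-preserving (odd) real power, modelling `x^q` for rationals `q` with odd
numerator and denominator. -/
def opow (x q : ℝ) : ℝ := Real.sign x * |x| ^ q

def I1fun (a c : ℝ) (ψ v : ℝ → ℝ) : ℝ :=
  ∫ x : ℝ, (ψ x ^ 2 - c * deriv ψ x ^ 2 + v x ^ 2 - a * deriv v x ^ 2)

def I2fun (b ω : ℝ) (ψ v : ℝ → ℝ) : ℝ :=
  -2 * ω * ∫ x : ℝ, (ψ x * v x + b * deriv ψ x * deriv v x)

def Ifun (a b c ω : ℝ) (ψ v : ℝ → ℝ) : ℝ := I1fun a c ψ v + I2fun b ω ψ v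

/-- `G(ψ,v) = (2/(p+1)) ∫ ψ v^{p+1}`; since `p = p₁/p₂` with `p₁, p₂` odd, the
exponent `p+1` has even numerator and odd denominator, so `v^{p+1} = |v|^{p+1}`. -/
def Gfun (p : ℝ) (ψ v : ℝ → ℝ) : ℝ :=
  (2 / (p + 1)) * ∫ x : ℝ, ψ x * |v x| ^ (p + 1)

/-- Constrained infimum `𝓘_ω`. -/
def Iinf (a b c ω p : ℝ) : ℝ :=
  sInf {r : ℝ | ∃ ψ v : ℝ → ℝ, InH1 ψ ∧ InH1 v ∧ Gfun p ψ v = -1 ∧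
    r = Ifun a b c ω ψ v}

/-- `𝓖_ω`: the set of minimizers of `I_ω` subject to `G = -1`. -/
def Gset (a b c ω p : ℝ) : Set ((ℝ → ℝ) × (ℝ → ℝ)) :=
  {pv | InH1 pv.1 ∧ InH1 pv.2 ∧ Gfun p pv.1 pv.2 = -1 ∧
    Ifun a b c ω pv.1 pv.2 = Iinf a b c ω p}

/-- `𝓖̃_ω = ((2/(p+2)) 𝓘_ω)^{1/p} · 𝓖_ω`. -/
def Gtilde (a b c ω p : ℝ) : Set ((ℝ → ℝ) × (ℝ → ℝ)) :=
  {qw | ∃ pv ∈ Gset a b c ω p,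
    qw = (fun x => ((2 / (p + 2)) * Iinf a b c ω p) ^ (1 / p) * pv.1 x,
          fun x => ((2 / (p + 2)) * Iinf a b c ω p) ^ (1 / p) * pv.2 x)}

/-- The traveling-wave system `-ω(ψ - bψ'') + v + a v'' + ψ v^p = 0`,
`ω(-v + b v'') + ψ + c ψ'' + (1/(p+1)) v^{p+1} = 0`, for `(ψ,v) ∈ H¹ × H¹`
classical (twice continuously differentiable) solutions. -/
def TravelingWave (a b c ω p : ℝ) (ψ v : ℝ → ℝ) : Prop :=
  InH1 ψ ∧ InH1 v ∧ ContDiff ℝ 2 ψ ∧ ContDiff ℝ 2 v ∧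
  (∀ x : ℝ, -ω * (ψ x - b * iteratedDeriv 2 ψ x) + v x + a * iteratedDeriv 2 v x
      + ψ x * opow (v x) p = 0) ∧
  (∀ x : ℝ, ω * (-(v x) + b * iteratedDeriv 2 v x) + ψ x + c * iteratedDeriv 2 ψ x
      + (1 / (p + 1)) * |v x| ^ (p + 1) = 0)

/-- The Hamiltonian `𝓗`. -/
def Ham (a c p : ℝ) (η u : ℝ → ℝ) : ℝ :=
  (1 / 2) * ∫ x : ℝ, (η x ^ 2 - c * deriv η x ^ 2 + u x ^ 2 - a * deriv u x ^ 2
      + (2 / (p + 1)) * η x * |u x| ^ (p + 1))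

/-- The charge `𝓠`. -/
def charge (b : ℝ) (η u : ℝ → ℝ) : ℝ :=
  -∫ x : ℝ, (η x * u x + b * deriv η x * deriv u x)

/-- The scalar function `d(ω)`. -/
def dfun (a b c p : ℝ) (ω : ℝ) : ℝ :=
  (p / (2 * (p + 2))) * (2 / (p + 2)) ^ ((2 : ℝ) / p) *
    (Iinf a b c ω p) ^ ((p + 2) / p)

/-- `ω(ε) = √(1 - ε^{2/(p+1)})`. -/
def omEps (p ε : ℝ) : ℝ := Real.sqrt (1 - ε ^ ((2 : ℝ) / (p + 1)))

def I1eps (a c p ε : ℝ) (z w : ℝ → ℝ) : ℝ :=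
  ∫ y : ℝ, (ε ^ (-(2 : ℝ) / (p + 1)) * z y ^ 2 - c * deriv z y ^ 2
    + ε ^ (-(2 : ℝ) / (p + 1)) * w y ^ 2 - a * deriv w y ^ 2)

def I2eps (b p ε ω : ℝ) (z w : ℝ → ℝ) : ℝ :=
  -2 * ω * ∫ y : ℝ, (ε ^ (-(2 : ℝ) / (p + 1)) * z y * w y + b * deriv z y * deriv w y)

/-- Rescaled functional `I^ε` (with `ω = ω(ε)`). -/
def Ieps (a b c p ε : ℝ) (z w : ℝ → ℝ) : ℝ :=
  I1eps a c p ε z w + I2eps b p ε (omEps p ε) z w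

def IinfEps (a b c p ε : ℝ) : ℝ :=
  sInf {r : ℝ | ∃ z w : ℝ → ℝ, InH1 z ∧ InH1 w ∧ Gfun p z w = -1 ∧
    r = Ieps a b c p ε z w}

def Jeps (a b c p ε : ℝ) (w : ℝ → ℝ) : ℝ :=
  (∫ y : ℝ, ε ^ (-(2 : ℝ) / (p + 1)) * (1 - omEps p ε ^ 2) * w y ^ 2)
    + ∫ y : ℝ, -((2 * b + c) * omEps p ε ^ 2 + a) * deriv w y ^ 2

def Keps (p ε : ℝ) (w : ℝ → ℝ) : ℝ := Gfun p (fun x => omEps p ε * w x) w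

def JinfEps (a b c p ε : ℝ) : ℝ :=
  sInf {r : ℝ | ∃ w : ℝ → ℝ, InH1 w ∧ Keps p ε w = -1 ∧ r = Jeps a b c p ε w}

def J0fun (σ : ℝ) (w : ℝ → ℝ) : ℝ :=
  ∫ y : ℝ, (w y ^ 2 + (σ - 1 / 3) * deriv w y ^ 2)

/-- `K⁰(w) = (2/(p+1)) ∫ w^{p+2}`; the exponent `p+2` has odd numerator and
odd denominator, so `w^{p+2}` is the sign-preserving power. -/
def K0fun (p : ℝ) (w : ℝ → ℝ) : ℝ :=
  (2 / (p + 1)) * ∫ y : ℝ, opow (w y) (p + 2)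

def Jinf0 (σ p : ℝ) : ℝ :=
  sInf {r : ℝ | ∃ w : ℝ → ℝ, InH1 w ∧ K0fun p w = -1 ∧ r = J0fun σ w}

/-- The Beta function `B(x,y) = ∫₀¹ t^{x-1}(1-t)^{y-1} dt`. -/
def betaFn (x y : ℝ) : ℝ := ∫ t in (0 : ℝ)..1, t ^ (x - 1) * (1 - t) ^ (y - 1)

lemma InH1.sq_le {u : ℝ → ℝ} (hu : InH1 u) (x : ℝ) :
    u x ^ 2 ≤ ∫ y : ℝ, (u y ^ 2 + deriv u y ^ 2) := by
  obtain ⟨hu1, hu2, hu3⟩ := hu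
  have hu_sq : Integrable (fun y => u y ^ 2) := hu2.integrable_sq
  have hu'_sq : Integrable (fun y => deriv u y ^ 2) := hu3.integrable_sq
  have hsum : Integrable (fun y => u y ^ 2 + deriv u y ^ 2) := hu_sq.add hu'_sq
  set g : ℝ → ℝ := fun y => 2 * u y * deriv u y with hg
  have hmeas : AEStronglyMeasurable g (volume : Measure ℝ) :=
    ((hu1.continuous.measurable.const_mul 2).mul (measurable_deriv u)).aestronglyMeasurable
  have hbound : ∀ y, ‖g y‖ ≤ u y ^ 2 + deriv u y ^ 2 := by
    intro y
    rw [Real.norm_eq_abs, hg]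
    have h1 : |2 * u y * deriv u y| = 2 * |u y| * |deriv u y| := by
      rw [abs_mul, abs_mul, abs_two]
    rw [h1]
    nlinarith [two_mul_le_add_sq |u y| |deriv u y|, sq_abs (u y), sq_abs (deriv u y)]
  have hg_int : Integrable g := Integrable.mono' hsum hmeas (ae_of_all _ hbound)
  have hderiv : ∀ y : ℝ, HasDerivAt (fun t => u t ^ 2) (g y) y := by
    intro y
    have := ((hu1 y).hasDerivAt).pow 2
    simpa [hg, mul_comm, mul_assoc, Pi.pow_def] using this
  have htend : Tendsto (fun y => u y ^ 2) atBot (𝓝 0) :=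
    tendsto_zero_of_hasDerivAt_of_integrableOn_Iic (a := x)
      (fun y _ => hderiv y) hg_int.integrableOn hu_sq.integrableOn
  have heq : ∫ y in Iic x, g y = u x ^ 2 - 0 :=
    integral_Iic_of_hasDerivAt_of_tendsto' (fun y _ => hderiv y) hg_int.integrableOn htend
  have h1 : u x ^ 2 = ∫ y in Iic x, g y := by rw [heq, sub_zero]
  rw [h1]
  calc ∫ y in Iic x, g y ≤ ∫ y in Iic x, (u y ^ 2 + deriv u y ^ 2) :=
        setIntegral_mono hg_int.integrableOn hsum.integrableOn
          (fun y => (le_abs_self _).trans (hbound y))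
    _ ≤ ∫ y : ℝ, (u y ^ 2 + deriv u y ^ 2) :=
        setIntegral_le_integral hsum (ae_of_all _ fun y => by positivity)

/-- Main coercivity estimate with explicit constants. -/
lemma ham_ge (a c p : ℝ) (ha : a < 0) (hc : c < 0) (hp1 : 1 ≤ p)
    (η u : ℝ → ℝ) (hη : InH1 η) (hu : InH1 u) :
    Ham a c p η u ≥ (min 1 (min (-a) (-c)) / 2) * Real.sqrt (XnormSq η u) ^ 2 *
      (1 - (1 / (min 1 (min (-a) (-c)) * (p + 1))) * Real.sqrt (XnormSq η u) ^ p) := by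
  set m : ℝ := min 1 (min (-a) (-c)) with hm
  have hm0 : 0 < m := lt_min one_pos (lt_min (by linarith) (by linarith))
  have hm1 : m ≤ 1 := min_le_left _ _
  have hma : m ≤ -a := (min_le_right _ _).trans (min_le_left _ _)
  have hmc : m ≤ -c := (min_le_right _ _).trans (min_le_right _ _)
  have hp0 : 0 < p := lt_of_lt_of_le one_pos hp1
  have hp1' : (0:ℝ) < p + 1 := by linarith
  -- integrability facts
  have hη2 : Integrable (fun x => η x ^ 2) := hη.2.1.integrable_sq
  have hη'2 : Integrable (fun x => deriv η x ^ 2) := hη.2.2.integrable_sq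
  have hu2 : Integrable (fun x => u x ^ 2) := hu.2.1.integrable_sq
  have hu'2 : Integrable (fun x => deriv u x ^ 2) := hu.2.2.integrable_sq
  have hI4 : Integrable (fun x => η x ^ 2 + deriv η x ^ 2 + u x ^ 2 + deriv u x ^ 2) :=
    ((hη2.add hη'2).add hu2).add hu'2
  set Q : ℝ := XnormSq η u with hQdef
  have hQ0 : 0 ≤ Q := integral_nonneg (fun x => by positivity)
  set N : ℝ := Real.sqrt Q with hNdef
  have hN0 : 0 ≤ N := Real.sqrt_nonneg _
  have hNsq : N ^ 2 = Q := Real.sq_sqrt hQ0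
  have hNp : (0:ℝ) ≤ N ^ p := Real.rpow_nonneg hN0 _
  -- sup bound for u
  have hsup : ∀ x, |u x| ≤ N := by
    intro x
    have h1 : u x ^ 2 ≤ ∫ y : ℝ, (u y ^ 2 + deriv u y ^ 2) := hu.sq_le x
    have h2 : (∫ y : ℝ, (u y ^ 2 + deriv u y ^ 2)) ≤ Q := by
      refine integral_mono (hu2.add hu'2) hI4 (fun y => ?_)
      have : 0 ≤ η y ^ 2 + deriv η y ^ 2 := by positivity
      simp only []
      linarith
    have := Real.sqrt_le_sqrt (le_trans h1 h2)
    rwa [Real.sqrt_sq_eq_abs] at this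
  -- pointwise bound on the nonlinear term
  have hptw : ∀ x, |(2 / (p + 1)) * η x * |u x| ^ (p + 1)| ≤
      (N ^ p / (p + 1)) * (η x ^ 2 + u x ^ 2) := by
    intro x
    have hup : |u x| ^ (p + 1) ≤ N ^ p * |u x| := by
      rcases eq_or_lt_of_le (abs_nonneg (u x)) with h0 | h0
      · rw [← h0, Real.zero_rpow (by positivity)]
        simp
      · have : |u x| ^ (p + 1) = |u x| ^ p * |u x| := by
          rw [Real.rpow_add h0, Real.rpow_one]
        rw [this]
        have h1 : |u x| ^ p ≤ N ^ p := Real.rpow_le_rpow (abs_nonneg _) (hsup x) hp0.le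
        exact mul_le_mul_of_nonneg_right h1 (abs_nonneg _)
    have hnn : 0 ≤ |u x| ^ (p + 1) := Real.rpow_nonneg (abs_nonneg _) _
    have habs : |(2 / (p + 1)) * η x * |u x| ^ (p + 1)| =
        (2 / (p + 1)) * |η x| * |u x| ^ (p + 1) := by
      rw [abs_mul, abs_mul, abs_of_nonneg hnn, abs_of_nonneg (by positivity : (0:ℝ) ≤ 2 / (p+1))]
    rw [habs]
    have h2 : (2 / (p + 1)) * |η x| * |u x| ^ (p + 1) ≤
        (2 / (p + 1)) * |η x| * (N ^ p * |u x|) := by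
      apply mul_le_mul_of_nonneg_left hup (by positivity)
    refine h2.trans ?_
    have key : N ^ p * (2 * |η x| * |u x|) ≤ N ^ p * (η x ^ 2 + u x ^ 2) := by
      apply mul_le_mul_of_nonneg_left ?_ hNp
      nlinarith [two_mul_le_add_sq |η x| |u x|, sq_abs (η x), sq_abs (u x)]
    calc (2 / (p + 1)) * |η x| * (N ^ p * |u x|)
        = (N ^ p * (2 * |η x| * |u x|)) / (p + 1) := by ring
      _ ≤ (N ^ p * (η x ^ 2 + u x ^ 2)) / (p + 1) := by gcongr
      _ = (N ^ p / (p + 1)) * (η x ^ 2 + u x ^ 2) := by ring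
  -- integrability of the nonlinear term
  have hcont_nl : Continuous (fun x => (2 / (p + 1)) * η x * |u x| ^ (p + 1)) := by
    have h1 : Continuous fun x => |u x| ^ (p + 1) :=
      (continuous_abs.comp hu.1.continuous).rpow_const (fun x => Or.inr (by positivity))
    exact (continuous_const.mul hη.1.continuous).mul h1
  have hdom : Integrable (fun x => (N ^ p / (p + 1)) * (η x ^ 2 + u x ^ 2)) :=
    (hη2.add hu2).const_mul _
  have hIn : Integrable (fun x => (2 / (p + 1)) * η x * |u x| ^ (p + 1)) :=
    Integrable.mono' hdom hcont_nl.aestronglyMeasurable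
      (ae_of_all _ fun x => by rw [Real.norm_eq_abs]; exact hptw x)
  have hIq : Integrable (fun x => η x ^ 2 - c * deriv η x ^ 2 + u x ^ 2 - a * deriv u x ^ 2) :=
    ((hη2.sub (hη'2.const_mul c)).add hu2).sub (hu'2.const_mul a)
  -- split the Hamiltonian
  have hsplit : Ham a c p η u = (1 / 2) *
      ((∫ x : ℝ, (η x ^ 2 - c * deriv η x ^ 2 + u x ^ 2 - a * deriv u x ^ 2)) +
        ∫ x : ℝ, (2 / (p + 1)) * η x * |u x| ^ (p + 1)) := by
    rw [Ham, ← integral_add hIq hIn]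
  -- quadratic part bound
  have hquad : m * Q ≤ ∫ x : ℝ, (η x ^ 2 - c * deriv η x ^ 2 + u x ^ 2 - a * deriv u x ^ 2) := by
    have h1 : (∫ x : ℝ, m * (η x ^ 2 + deriv η x ^ 2 + u x ^ 2 + deriv u x ^ 2)) ≤
        ∫ x : ℝ, (η x ^ 2 - c * deriv η x ^ 2 + u x ^ 2 - a * deriv u x ^ 2) := by
      refine integral_mono (hI4.const_mul m) hIq (fun x => ?_)
      simp only []
      nlinarith [mul_le_mul_of_nonneg_right hm1 (sq_nonneg (η x)),
        mul_le_mul_of_nonneg_right hmc (sq_nonneg (deriv η x)),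
        mul_le_mul_of_nonneg_right hm1 (sq_nonneg (u x)),
        mul_le_mul_of_nonneg_right hma (sq_nonneg (deriv u x))]
    rwa [integral_const_mul] at h1
  -- nonlinear part bound
  have hnl : -((N ^ p / (p + 1)) * Q) ≤ ∫ x : ℝ, (2 / (p + 1)) * η x * |u x| ^ (p + 1) := by
    have h1 : |∫ x : ℝ, (2 / (p + 1)) * η x * |u x| ^ (p + 1)| ≤
        ∫ x : ℝ, |(2 / (p + 1)) * η x * |u x| ^ (p + 1)| := by
      have := norm_integral_le_integral_norm (μ := volume)
        (fun x : ℝ => (2 / (p + 1)) * η x * |u x| ^ (p + 1))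
      simp only [Real.norm_eq_abs] at this
      exact this
    have h2 : (∫ x : ℝ, |(2 / (p + 1)) * η x * |u x| ^ (p + 1)|) ≤
        ∫ x : ℝ, (N ^ p / (p + 1)) * (η x ^ 2 + u x ^ 2) :=
      integral_mono hIn.abs hdom hptw
    have h3 : (∫ x : ℝ, (N ^ p / (p + 1)) * (η x ^ 2 + u x ^ 2)) =
        (N ^ p / (p + 1)) * ∫ x : ℝ, (η x ^ 2 + u x ^ 2) := integral_const_mul _ _
    have h4 : (∫ x : ℝ, (η x ^ 2 + u x ^ 2)) ≤ Q := by
      refine integral_mono (hη2.add hu2) hI4 (fun x => ?_)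
      have h5 : 0 ≤ deriv η x ^ 2 := sq_nonneg _
      have h6 : 0 ≤ deriv u x ^ 2 := sq_nonneg _
      simp only []
      linarith
    have h7 : (N ^ p / (p + 1)) * (∫ x : ℝ, (η x ^ 2 + u x ^ 2)) ≤ (N ^ p / (p + 1)) * Q :=
      mul_le_mul_of_nonneg_left h4 (by positivity)
    have := neg_abs_le (∫ x : ℝ, (2 / (p + 1)) * η x * |u x| ^ (p + 1))
    linarith [h3 ▸ h2]
  -- conclude
  rw [ge_iff_le, hsplit, hNsq]
  have hexp : (m / 2) * Q * (1 - (1 / (m * (p + 1))) * N ^ p) =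
      m * Q / 2 - (N ^ p / (p + 1) * Q) / 2 := by
    field_simp [hm0.ne', hp1'.ne']
  rw [hexp]
  linarith

/-- Coercivity of the Hamiltonian near the origin:
`𝓗(η,u) ≥ c₀‖(η,u)‖²_X (1 - c₁‖(η,u)‖ᵖ_X)`, and the resulting a priori bound
for small data. -/
theorem hamiltonian_coercivity
    (a c p : ℝ) (p₁ p₂ : ℕ)
    (ha : a < 0) (hc : c < 0)
    (hp₁ : Odd p₁) (hp₂ : Odd p₂) (hcop : Nat.Coprime p₁ p₂)
    (hpval : p = (p₁ : ℝ) / (p₂ : ℝ)) (hp1 : 1 ≤ p) :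
    ∃ c₀ > (0 : ℝ), ∃ c₁ > (0 : ℝ),
      (∀ η u : ℝ → ℝ, InH1 η → InH1 u →
        Ham a c p η u ≥ c₀ * Real.sqrt (XnormSq η u) ^ 2 *
          (1 - c₁ * Real.sqrt (XnormSq η u) ^ p)) ∧
      (∀ η u : ℝ → ℝ, InH1 η → InH1 u →
        Real.sqrt (XnormSq η u) ≤ (1 / (2 * c₁)) ^ (1 / p) →
          0 ≤ Ham a c p η u ∧
          Real.sqrt (XnormSq η u) ≤ Real.sqrt (2 * Ham a c p η u / c₀)) := by
  have hp0 : 0 < p := lt_of_lt_of_le one_pos hp1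
  set m : ℝ := min 1 (min (-a) (-c)) with hm
  have hm0 : 0 < m := lt_min one_pos (lt_min (by linarith) (by linarith))
  refine ⟨m / 2, by positivity, 1 / (m * (p + 1)), by positivity, ?_, ?_⟩
  · intro η u hη hu
    exact ham_ge a c p ha hc hp1 η u hη hu
  · intro η u hη hu hN
    set c₀ : ℝ := m / 2 with hc₀def
    set c₁ : ℝ := 1 / (m * (p + 1)) with hc₁def
    have hc₀ : 0 < c₀ := by positivity
    have hc₁ : 0 < c₁ := by positivity
    have key := ham_ge a c p ha hc hp1 η u hη hu
    set N : ℝ := Real.sqrt (XnormSq η u) with hNdef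
    have hN0 : 0 ≤ N := Real.sqrt_nonneg _
    have hNp_le : N ^ p ≤ 1 / (2 * c₁) := by
      have h := Real.rpow_le_rpow hN0 hN hp0.le
      rwa [← Real.rpow_mul (by positivity), one_div (p), inv_mul_cancel₀ (ne_of_gt hp0),
        Real.rpow_one] at h
    have h12 : c₁ * N ^ p ≤ 1 / 2 := by
      have h1 : c₁ * N ^ p ≤ c₁ * (1 / (2 * c₁)) := mul_le_mul_of_nonneg_left hNp_le hc₁.le
      have h2 : c₁ * (1 / (2 * c₁)) = 1 / 2 := by field_simp
      linarith
    have hsqN : 0 ≤ c₀ * N ^ 2 := mul_nonneg hc₀.le (sq_nonneg _)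
    have h3 : c₀ * N ^ 2 * (1 / 2) ≤ c₀ * N ^ 2 * (1 - c₁ * N ^ p) :=
      mul_le_mul_of_nonneg_left (by linarith) hsqN
    have hham : c₀ * N ^ 2 / 2 ≤ Ham a c p η u := by
      have := key
      nlinarith
    constructor
    · nlinarith
    · have hQle : N ^ 2 ≤ 2 * Ham a c p η u / c₀ := by
        rw [le_div_iff₀ hc₀]
        nlinarith
      calc N = Real.sqrt (N ^ 2) := (Real.sqrt_sq hN0).symm
        _ ≤ Real.sqrt (2 * Ham a c p η u / c₀) := Real.sqrt_le_sqrt hQle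

end
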